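/- Let C be an (n, M, d=2δ, k)_q constant dimension code with 1 ≤ δ ≤ k ≤ n−k, let v_1 be the binary vector 1^k 0^{n−k} (ones in the first k coordinates), and let C_1 = { X ∈ C : v(X) = v_1 }. If |C_1| = q^{(k−δ+1)(n−k)}, then every codeword Y ∈ C with d_H(v(Y), v_1) < 2δ satisfies v(Y) = v_1 (i.e., Y ∈ C_1); equivalently, there is no codeword Y ∈ C with 0 < d_H(v(Y), v_1) < 2δ. -/

import Mathlib

/-- `M` is in reduced row echelon form with pivot (leading-one) column of row `i`
given by `piv i`: pivots strictly move right, each leading coefficient is `1`,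
it is the first nonzero entry of its row, and it is the only nonzero entry of
its column. -/
def IsRREFWithPivots {F : Type*} [Field F] {k n : ℕ}
    (M : Matrix (Fin k) (Fin n) F) (piv : Fin k → Fin n) : Prop :=
  StrictMono piv ∧
  (∀ i, M i (piv i) = 1) ∧
  (∀ (i : Fin k) (j : Fin n), j < piv i → M i j = 0) ∧
  (∀ i i' : Fin k, i' ≠ i → M i' (piv i) = 0)

/-- `M` is in reduced row echelon form. -/
def IsRREF {F : Type*} [Field F] {k n : ℕ} (M : Matrix (Fin k) (Fin n) F) : Prop :=
  ∃ piv, IsRREFWithPivots M piv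

/-- The identifying (binary) vector associated with pivot columns `piv`:
its ones are exactly in the pivot positions. -/
def idVec {k n : ℕ} (piv : Fin k → Fin n) : Fin n → Bool :=
  fun j => decide (∃ i, piv i = j)

/-- The subspace distance `d_S(X,Y) = dim X + dim Y - 2 dim (X ⊓ Y)`. -/
noncomputable def subDist {F : Type*} [Field F] {n : ℕ} (X Y : Submodule F (Fin n → F)) : ℕ :=
  Module.finrank F X + Module.finrank F Y - 2 * Module.finrank F ↥(X ⊓ Y)


lemma fin_sm_le {k n : ℕ} (f : Fin k → Fin n) (hf : StrictMono f) :
    ∀ i : Fin k, (i : ℕ) ≤ (f i : ℕ) := by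
  have H : ∀ m : ℕ, ∀ i : Fin k, (i : ℕ) = m → m ≤ (f i : ℕ) := by
    intro m
    induction m with
    | zero => intro i _; omega
    | succ p ih =>
      intro i hi
      have hp : p < k := by omega
      have h1 : (⟨p, hp⟩ : Fin k) < i := by rw [Fin.lt_def]; simp; omega
      have h2 := hf h1
      have h3 := ih ⟨p, hp⟩ rfl
      rw [Fin.lt_def] at h2
      omega
  exact fun i => H (i : ℕ) i rfl

lemma fin_sm_eq_id {k n : ℕ} (f : Fin k → Fin n) (hf : StrictMono f)
    (hlt : ∀ i, (f i : ℕ) < k) : ∀ i, (f i : ℕ) = (i : ℕ) := by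
  intro i
  have h1 := fin_sm_le f hf i
  set g : Fin k → Fin k := fun i => ⟨f i, hlt i⟩ with hg
  have hgm : StrictMono g := by
    intro a b hab
    rw [Fin.lt_def]
    exact hf hab
  set g' : Fin k → Fin k := fun i => Fin.rev (g (Fin.rev i)) with hg'
  have hg'm : StrictMono g' := by
    intro a b hab
    simp only [hg', Fin.rev_lt_rev]
    exact hgm (Fin.rev_lt_rev.mpr hab)
  have h2 := fin_sm_le g' hg'm (Fin.rev i)
  simp only [hg', Fin.rev_rev, Fin.val_rev] at h2
  have h3 : (g i : ℕ) = (f i : ℕ) := rfl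
  have h4 : (g i : ℕ) < k := (g i).isLt
  have h5 : (i : ℕ) < k := i.isLt
  omega

lemma indep_of_delta {F : Type*} [Field F] {r m : ℕ} (u : Fin r → Fin m → F) (col : Fin r → Fin m)
    (h : ∀ s s', u s (col s') = if s = s' then 1 else 0) : LinearIndependent F u := by
  rw [Fintype.linearIndependent_iff]
  intro c hc s
  have h0 : ∑ s', c s' * u s' (col s) = 0 := by
    have := congrFun hc (col s)
    simpa [Finset.sum_apply] using this
  rw [Finset.sum_eq_single s (fun b _ hb => by rw [h b s, if_neg hb, mul_zero]) (by simp)] at h0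
  simpa [h s s] using h0

/-- **Lemma 5 of the paper.** Let `C` be an `(n, M, d = 2δ, k)_q`
constant dimension code with `1 ≤ δ ≤ k ≤ n - k`, let `v₁ = 1^k 0^(n-k)`, and
let `C₁ = {X ∈ C : v(X) = v₁}`. If `|C₁| = q^((k-δ+1)(n-k))`, then every
codeword `Y ∈ C` with `d_H(v(Y), v₁) < 2δ` satisfies `v(Y) = v₁`. -/
theorem no_close_identifying_vector_first {F : Type*} [Field F] [Fintype F]
    {n k δ : ℕ} (hδ1 : 1 ≤ δ) (hδk : δ ≤ k) (hk : k ≤ n - k)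
    (C : Set (Submodule F (Fin n → F)))
    (hdim : ∀ X ∈ C, Module.finrank F X = k)
    (hdist : ∀ X ∈ C, ∀ Y ∈ C, X ≠ Y → 2 * δ ≤ subDist X Y)
    (v1 : Fin n → Bool) (hv1 : v1 = fun j : Fin n => decide ((j : ℕ) < k))
    (hC1 : Nat.card ↥{X | X ∈ C ∧
        ∃ (M : Matrix (Fin k) (Fin n) F) (piv : Fin k → Fin n),
          IsRREFWithPivots M piv ∧ Submodule.span F (Set.range M) = X ∧
          idVec piv = v1} =
      Fintype.card F ^ ((k - δ + 1) * (n - k))) :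
    ∀ Y ∈ C, ∀ (MY : Matrix (Fin k) (Fin n) F) (pivY : Fin k → Fin n),
      IsRREFWithPivots MY pivY → Submodule.span F (Set.range MY) = Y →
      hammingDist (idVec pivY) v1 < 2 * δ → idVec pivY = v1 := by
  intro Y hYC MY pivY hRY hSY hH
  by_contra hne
  classical
  obtain ⟨hsmY, hY1, hY2, hY3⟩ := hRY
  have hkn : k ≤ n := by omega
  -- there is a pivot at column ≥ k
  have hi0 : ∃ i0 : Fin k, k ≤ (pivY i0 : ℕ) := by
    by_contra h
    push_neg at h
    apply hne
    have hid := fin_sm_eq_id pivY hsmY h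
    funext j
    rw [hv1]
    simp only [idVec]
    rw [decide_eq_decide]
    constructor
    · rintro ⟨i, rfl⟩; exact h i
    · intro hj; exact ⟨⟨(j : ℕ), hj⟩, Fin.ext (hid _)⟩
  obtain ⟨i0, hi0⟩ := hi0
  -- Hamming distance counting
  set P : Finset (Fin k) := Finset.univ.filter (fun i => (pivY i : ℕ) < k) with hPdef
  set B : Finset (Fin k) := Finset.univ.filter (fun i => ¬ (pivY i : ℕ) < k) with hBdef
  have hinjY : Function.Injective pivY := hsmY.injective
  have hPB : P.card + B.card = k := by
    rw [hPdef, hBdef, Finset.card_filter_add_card_filter_not, Finset.card_univ,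
      Fintype.card_fin]
  have hDsets : (Finset.univ.filter fun j : Fin n => idVec pivY j ≠ v1 j)
      = B.image pivY ∪ ((Finset.univ.filter fun j : Fin n => (j : ℕ) < k) \ P.image pivY) := by
    ext j
    simp only [Finset.mem_filter, Finset.mem_union, Finset.mem_sdiff, Finset.mem_image,
      Finset.mem_univ, true_and, idVec, hv1, ne_eq, hPdef, hBdef]
    rw [decide_eq_decide]
    constructor
    · intro hne'
      by_cases hj : (j : ℕ) < k
      · right
        refine ⟨hj, ?_⟩
        rintro ⟨i, _, rfl⟩
        exact hne' (iff_of_true ⟨i, rfl⟩ hj)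
      · left
        have hA : ∃ i, pivY i = j := by
          by_contra hA
          exact hne' (iff_of_false hA hj)
        obtain ⟨i, rfl⟩ := hA
        exact ⟨i, hj, rfl⟩
    · rintro (⟨i, hiB, rfl⟩ | ⟨hj, hnp⟩)
      · intro hiff
        exact hiB (hiff.mp ⟨i, rfl⟩)
      · intro hiff
        obtain ⟨i, rfl⟩ := hiff.mpr hj
        exact hnp ⟨i, hj, rfl⟩
  have hdisj : Disjoint (B.image pivY)
      ((Finset.univ.filter fun j : Fin n => (j : ℕ) < k) \ P.image pivY) := by
    rw [Finset.disjoint_left]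
    intro a ha hb
    simp only [Finset.mem_image, hBdef, Finset.mem_filter, Finset.mem_univ, true_and] at ha
    simp only [Finset.mem_sdiff, Finset.mem_filter, Finset.mem_univ, true_and] at hb
    obtain ⟨i, hik, rfl⟩ := ha
    exact hik hb.1
  have hIk : (Finset.univ.filter fun j : Fin n => (j : ℕ) < k).card = k := by
    rw [show (Finset.univ.filter fun j : Fin n => (j : ℕ) < k)
        = Finset.image (Fin.castLE hkn) Finset.univ from ?_]
    · rw [Finset.card_image_of_injective _ (Fin.castLE_injective hkn), Finset.card_univ,
        Fintype.card_fin]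
    · ext j
      simp only [Finset.mem_filter, Finset.mem_image, Finset.mem_univ, true_and]
      constructor
      · intro hj; exact ⟨⟨(j : ℕ), hj⟩, Fin.ext rfl⟩
      · rintro ⟨i, rfl⟩; exact i.isLt
  have hPsub : P.image pivY ⊆ Finset.univ.filter fun j : Fin n => (j : ℕ) < k := by
    intro j hj
    simp only [Finset.mem_image, hPdef, Finset.mem_filter, Finset.mem_univ, true_and] at hj ⊢
    obtain ⟨i, hik, rfl⟩ := hj
    exact hik
  have hDcard : hammingDist (idVec pivY) v1 = 2 * B.card := by
    have : hammingDist (idVec pivY) v1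
        = (Finset.univ.filter fun j : Fin n => idVec pivY j ≠ v1 j).card := rfl
    rw [this, hDsets, Finset.card_union_of_disjoint hdisj, Finset.card_sdiff_of_subset hPsub, hIk,
      Finset.card_image_of_injective _ hinjY, Finset.card_image_of_injective _ hinjY]
    omega
  have hBcard : B.card < δ := by
    rw [hDcard] at hH
    omega
  have hPcard : k - δ + 1 ≤ P.card := by omega
  -- choose the rows with pivots in the first k columns
  obtain ⟨t, htP, htcard⟩ := Finset.exists_subset_card_eq hPcard
  set e0 : Fin (k - δ + 1) ≃ t := (Finset.equivFinOfCardEq htcard).symm with he0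
  set e : Fin (k - δ + 1) → Fin k := fun s => (e0 s : Fin k) with he
  have he_inj : Function.Injective e := fun a b h => e0.injective (Subtype.ext h)
  have heP : ∀ s, (pivY (e s) : ℕ) < k := by
    intro s
    have := htP (e0 s).2
    rw [hPdef] at this
    simpa using this
  -- the set C₁
  set S : Set (Submodule F (Fin n → F)) := {X | X ∈ C ∧
      ∃ (M : Matrix (Fin k) (Fin n) F) (piv : Fin k → Fin n),
        IsRREFWithPivots M piv ∧ Submodule.span F (Set.range M) = X ∧
        idVec piv = v1} with hSdef
  choose MM pv hR hSp hid using fun X : ↥S => X.2.2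
  have hpvlt : ∀ (X : ↥S) (i : Fin k), (pv X i : ℕ) < k := by
    intro X i
    have h := congrFun (hid X) (pv X i)
    rw [hv1] at h
    simp only [idVec] at h
    exact (decide_eq_decide.mp h).mp ⟨i, rfl⟩
  have hpv : ∀ (X : ↥S) (i : Fin k), (pv X i : ℕ) = (i : ℕ) :=
    fun X => fin_sm_eq_id _ (hR X).1 (hpvlt X)
  have hMM : ∀ (X : ↥S) (i j : Fin k), MM X i (Fin.castLE hkn j) = if i = j then (1 : F) else 0 := by
    intro X i j
    by_cases hij : i = j
    · subst hij
      rw [if_pos rfl, show Fin.castLE hkn i = pv X i from Fin.ext (by simp [hpv])]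
      exact (hR X).2.1 i
    · rw [if_neg hij, show Fin.castLE hkn j = pv X j from Fin.ext (by simp [hpv])]
      exact (hR X).2.2.2 j i hij
  -- the vectors w
  set wv : ↥S → Fin (k - δ + 1) → (Fin n → F) :=
    fun X s => ∑ i, MY (e s) (Fin.castLE hkn i) • MM X i with hwvdef
  have hsum : ∀ (X : ↥S) s (j : Fin n),
      wv X s j = ∑ i, MY (e s) (Fin.castLE hkn i) * MM X i j := by
    intro X s j
    rw [hwvdef]
    simp [Finset.sum_apply]
  have hwmem : ∀ (X : ↥S) s, wv X s ∈ (X : Submodule F (Fin n → F)) := by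
    intro X s
    rw [hwvdef, ← hSp X]
    exact Submodule.sum_mem _ fun i _ =>
      Submodule.smul_mem _ _ (Submodule.subset_span (Set.mem_range_self i))
  have hwlt : ∀ (X : ↥S) s (j : Fin n), (j : ℕ) < k → wv X s j = MY (e s) j := by
    intro X s j hj
    have hcast : Fin.castLE hkn (⟨(j : ℕ), hj⟩ : Fin k) = j := Fin.ext rfl
    rw [hsum, ← hcast]
    rw [Finset.sum_eq_single (⟨(j : ℕ), hj⟩ : Fin k)
      (fun b _ hb => by rw [hMM, if_neg hb, mul_zero]) (by simp)]
    rw [hMM, if_pos rfl, mul_one]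
  have hwge : ∀ (X : ↥S) s (j : Fin n), k ≤ (j : ℕ) →
      wv X s j = ∑ i, MY (e s) (Fin.castLE hkn i) * MM X i ⟨k + ((j : ℕ) - k), by omega⟩ := by
    intro X s j hj
    have hjeq : (⟨k + ((j : ℕ) - k), by omega⟩ : Fin n) = j := Fin.ext (by simp; omega)
    rw [hsum, hjeq]
  -- the map Φ
  set Φ : ↥S → (Fin (k - δ + 1) → Fin (n - k) → F) :=
    fun X s j => ∑ i, MY (e s) (Fin.castLE hkn i) * MM X i ⟨k + (j : ℕ), by omega⟩ with hΦdef
  -- independence of the truncated rows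
  have hu : LinearIndependent F (fun s (i : Fin k) => MY (e s) (Fin.castLE hkn i)) := by
    apply indep_of_delta _ (fun s => (⟨(pivY (e s) : ℕ), heP s⟩ : Fin k))
    intro s s'
    rw [show Fin.castLE hkn (⟨(pivY (e s') : ℕ), heP s'⟩ : Fin k) = pivY (e s') from Fin.ext rfl]
    by_cases hss : s = s'
    · subst hss
      rw [if_pos rfl]
      exact hY1 (e s)
    · rw [if_neg hss]
      exact hY3 (e s') (e s) (fun h => hss (he_inj h))
  have hrankle : ∀ (W W' : Submodule F (Fin n → F)) (w : Fin (k - δ + 1) → (Fin n → F)),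
      (∀ s, w s ∈ W ⊓ W') →
      LinearIndependent F w → k - δ + 1 ≤ Module.finrank F ↥(W ⊓ W') := by
    intro W W' w hmem hind
    have hws : LinearIndependent F (fun s => (⟨w s, hmem s⟩ : ↥(W ⊓ W'))) := by
      apply LinearIndependent.of_comp (Submodule.subtype (W ⊓ W'))
      exact hind
    simpa using hws.fintype_card_le_finrank
  -- injectivity of Φ
  have hΦinj : Function.Injective Φ := by
    intro X X' hΦ
    by_contra hXX'
    have hne' : (X : Submodule F (Fin n → F)) ≠ (X' : Submodule F (Fin n → F)) :=
      fun h => hXX' (Subtype.ext h)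
    have hweq : ∀ s, wv X s = wv X' s := by
      intro s
      funext j
      by_cases hj : (j : ℕ) < k
      · rw [hwlt X s j hj, hwlt X' s j hj]
      · rw [hwge X s j (by omega), hwge X' s j (by omega)]
        have h1 := congrFun (congrFun hΦ s) (⟨(j : ℕ) - k, by omega⟩ : Fin (n - k))
        rw [hΦdef] at h1
        simpa using h1
    have hmem : ∀ s, wv X s ∈ (X : Submodule F (Fin n → F)) ⊓ (X' : Submodule F (Fin n → F)) :=
      fun s => ⟨hwmem X s, by rw [hweq s]; exact hwmem X' s⟩
    have hind : LinearIndependent F (wv X) := by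
      apply LinearIndependent.of_comp (LinearMap.funLeft F F (Fin.castLE hkn))
      have hcomp : (⇑(LinearMap.funLeft F F (Fin.castLE hkn)) ∘ wv X)
          = fun s (i : Fin k) => MY (e s) (Fin.castLE hkn i) := by
        funext s i
        simp only [Function.comp_apply, LinearMap.funLeft_apply]
        exact hwlt X s _ i.isLt
      rw [hcomp]
      exact hu
    have hr := hrankle _ _ _ hmem hind
    have h2δ := hdist _ X.2.1 _ X'.2.1 hne'
    rw [subDist, hdim _ X.2.1, hdim _ X'.2.1] at h2δ
    omega
  -- cardinality and surjectivity
  have hfin1 : Finite (Submodule F (Fin n → F)) :=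
    Finite.of_injective (fun W => (W : Set (Fin n → F))) SetLike.coe_injective
  have hΦbij : Function.Bijective Φ := by
    rw [Nat.bijective_iff_injective_and_card]
    refine ⟨hΦinj, ?_⟩
    rw [hC1, Nat.card_eq_fintype_card]
    rw [Fintype.card_fun, Fintype.card_fun, Fintype.card_fin, Fintype.card_fin, ← pow_mul,
      mul_comm (n - k)]
  obtain ⟨X, hXZ⟩ := hΦbij.surjective (fun s j => MY (e s) ⟨k + (j : ℕ), by omega⟩)
  -- every selected row of MY lies in X
  have hkey : ∀ s, MY (e s) = wv X s := by
    intro s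
    funext j
    by_cases hj : (j : ℕ) < k
    · exact (hwlt X s j hj).symm
    · rw [hwge X s j (by omega)]
      have h1 := congrFun (congrFun hXZ s) (⟨(j : ℕ) - k, by omega⟩ : Fin (n - k))
      rw [hΦdef] at h1
      simp only at h1
      rw [h1]
      congr 1
      exact Fin.ext (by simp; omega)
  -- X ≠ Y
  have hXY : (X : Submodule F (Fin n → F)) ≠ Y := by
    intro hEq
    have hmemY : MY i0 ∈ (X : Submodule F (Fin n → F)) := by
      rw [hEq, ← hSY]
      exact Submodule.subset_span (Set.mem_range_self i0)
    rw [← hSp X] at hmemY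
    replace hmemY := (Submodule.mem_span_range_iff_exists_fun (R := F) (v := fun i => MM X i)).mp hmemY
    obtain ⟨c, hc⟩ := hmemY
    have hc0 : ∀ i : Fin k, c i = 0 := by
      intro i
      have h2 : MY i0 (Fin.castLE hkn i) = 0 :=
        hY2 i0 _ (by rw [Fin.lt_def]; have := i.isLt; simp; omega)
      have h3 : ∑ i', c i' * MM X i' (Fin.castLE hkn i) = 0 := by
        have h1 := congrFun hc (Fin.castLE hkn i)
        rw [h2] at h1
        simpa [Finset.sum_apply] using h1
      rw [Finset.sum_eq_single i (fun b _ hb => by rw [hMM, if_neg hb, mul_zero]) (by simp)] at h3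
      rw [hMM, if_pos rfl, mul_one] at h3
      exact h3
    have hzero := congrFun hc (pivY i0)
    rw [hY1 i0] at hzero
    simp [Finset.sum_apply, hc0] at hzero
  -- conclude
  have hmem2 : ∀ s, MY (e s) ∈ (X : Submodule F (Fin n → F)) ⊓ Y := fun s =>
    ⟨by rw [hkey s]; exact hwmem X s,
     by rw [← hSY]; exact Submodule.subset_span (Set.mem_range_self (e s))⟩
  have hMYli : LinearIndependent F MY := by
    apply indep_of_delta MY pivY
    intro s s'
    by_cases h : s = s'
    · subst h; rw [if_pos rfl]; exact hY1 s
    · rw [if_neg h]; exact hY3 s' s h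
  have hind2 : LinearIndependent F (MY ∘ e) := hMYli.comp e he_inj
  have hr := hrankle _ _ _ (fun s => hmem2 s) hind2
  have h2δ := hdist _ X.2.1 _ hYC hXY
  rw [subDist, hdim _ X.2.1, hdim _ hYC] at h2δ
  omega
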